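/- Let n and g be natural numbers with g + 2 \leq n. Let \beta_0, \ldots, \beta_g and f_{-1}, f_0, \ldots, f_{n-1} be rational numbers satisfying, for every j with 0 \leq j \leq n, the relation f_{j-1} = \binom{n}{j} + \sum_{i=0}^{j-2} (-1)^{i+1} \binom{n-2-i}{n-j} \beta_i (where the sum is empty if j < 2). Then for each i with 0 \leq i \leq g one has \beta_i = \sum_{j=1}^{i+1} (-1)^j f_{j} \binom{n - j - 1}{i - j + 1} + (i+1) \binom{n}{i+2}. -/

import Mathlib

open Finset

lemma altQ (m : ℕ) :
    ∑ s ∈ Finset.range (m + 1), (-1 : ℚ) ^ s * (m.choose s : ℚ)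
      = if m = 0 then 1 else 0 := by
  have h := Int.alternating_sum_range_choose (n := m)
  calc ∑ s ∈ Finset.range (m + 1), (-1 : ℚ) ^ s * (m.choose s : ℚ)
      = ((∑ s ∈ Finset.range (m + 1), ((-1) ^ s * (m.choose s : ℤ)) : ℤ) : ℚ) := by
        push_cast; rfl
    _ = if m = 0 then 1 else 0 := by rw [h]; split <;> simp

lemma lemA {n i j k : ℕ} (hin : i + 2 ≤ n) (hj1 : 1 ≤ j) (hji : j ≤ i + 1) (hki : k ≤ i) :
    (n - 2 - k).choose (n - (j + 1)) * (n - j - 1).choose (i + 1 - j)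
      = (n - 2 - k).choose (n - i - 2) * (i - k).choose (i + 1 - j) := by
  rcases lt_or_ge k j with hkj | hkj
  · have h1 : n - (j + 1) = n - j - 1 := by omega
    have h2 : i + 1 - j = (n - j - 1) - (n - i - 2) := by omega
    rw [h1, h2, Nat.choose_symm (by omega)]
    rw [Nat.choose_mul (show n - i - 2 ≤ n - j - 1 by omega)]
    congr 2 <;> omega
  · rw [Nat.choose_eq_zero_of_lt (by omega), Nat.choose_eq_zero_of_lt (show i - k < i + 1 - j by omega)]
    simp

lemma lemB {n i j : ℕ} (hin : i + 2 ≤ n) (hji : j ≤ i + 1) :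
    n.choose (j + 1) * (n - j - 1).choose (i + 1 - j)
      = n.choose (i + 2) * (i + 2).choose (j + 1) := by
  have h := Nat.choose_mul (n := n) (show j + 1 ≤ i + 2 by omega)
  have e1 : n - (j + 1) = n - j - 1 := by omega
  have e2 : i + 2 - (j + 1) = i + 1 - j := by omega
  rw [e1, e2] at h
  exact h.symm

/-- Betti numbers of the edge ideal of a graph (`2`-uniform hypergraph) with
`2`-linear resolution, in terms of the `f`-vector of the independence complex.
Here `f (j - 1)` plays the role of `f_{j-1}` (the number of `(j-1)`-dimensional
faces). -/
theorem betti_of_linear_resolution_graph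
    (n g : ℕ) (hg : g + 2 ≤ n)
    (β : ℕ → ℚ) (f : ℤ → ℚ)
    (hf : ∀ j : ℕ, j ≤ n →
      f ((j : ℤ) - 1) = (n.choose j : ℚ) +
        ∑ i ∈ Finset.range (j + 1 - 2),
          (-1) ^ (i + 1) * ((n - 2 - i).choose (n - j) : ℚ) * β i) :
    ∀ i ≤ g,
      β i = (∑ j ∈ Finset.Icc 1 (i + 1),
          (-1) ^ j * f (j : ℤ) * ((n - j - 1).choose (i + 1 - j) : ℚ)) +
        ((i : ℚ) + 1) * (n.choose (i + 2) : ℚ) := by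
  intro i hi
  have hin : i + 2 ≤ n := by omega
  -- Step 1: rewrite each summand using the hypothesis at `j + 1`.
  have step1 : ∀ j ∈ Finset.Icc 1 (i + 1),
      (-1 : ℚ) ^ j * f (j : ℤ) * ((n - j - 1).choose (i + 1 - j) : ℚ)
      = (-1 : ℚ) ^ j * (n.choose (j + 1) : ℚ) * ((n - j - 1).choose (i + 1 - j) : ℚ)
        + ∑ k ∈ Finset.range (i + 1),
            (-1 : ℚ) ^ (j + k + 1) * ((n - 2 - k).choose (n - i - 2) : ℚ)
              * ((i - k).choose (i + 1 - j) : ℚ) * β k := by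
    intro j hj
    simp only [Finset.mem_Icc] at hj
    have hfj := hf (j + 1) (by omega)
    have e0 : (((j + 1 : ℕ)) : ℤ) - 1 = (j : ℤ) := by push_cast; ring
    have e1 : j + 1 + 1 - 2 = j := by omega
    rw [e0, e1] at hfj
    rw [hfj, mul_add, add_mul]
    congr 1
    rw [Finset.mul_sum, Finset.sum_mul]
    rw [Finset.sum_subset (Finset.range_subset_range.2 (show j ≤ i + 1 from hj.2))
      (by
        intro k hk hk'
        simp only [Finset.mem_range] at hk hk'
        rw [Nat.choose_eq_zero_of_lt (show n - 2 - k < n - (j + 1) by omega)]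
        simp)]
    refine Finset.sum_congr rfl ?_
    intro k hk
    simp only [Finset.mem_range] at hk
    have hA := lemA (n := n) hin hj.1 hj.2 (show k ≤ i by omega)
    have hA' : ((n - 2 - k).choose (n - (j + 1)) : ℚ) * ((n - j - 1).choose (i + 1 - j) : ℚ)
        = ((n - 2 - k).choose (n - i - 2) : ℚ) * ((i - k).choose (i + 1 - j) : ℚ) := by
      exact_mod_cast congrArg (Nat.cast : ℕ → ℚ) hA
    calc (-1 : ℚ) ^ j * ((-1 : ℚ) ^ (k + 1) * ((n - 2 - k).choose (n - (j + 1)) : ℚ) * β k)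
          * ((n - j - 1).choose (i + 1 - j) : ℚ)
        = (-1 : ℚ) ^ (j + (k + 1)) * (((n - 2 - k).choose (n - (j + 1)) : ℚ)
            * ((n - j - 1).choose (i + 1 - j) : ℚ)) * β k := by rw [pow_add]; ring
      _ = _ := by rw [hA', show j + (k + 1) = j + k + 1 from rfl]; ring
  rw [Finset.sum_congr rfl step1, Finset.sum_add_distrib]
  -- Step 2: the first sum equals `-(i+1) * C(n, i+2)`.
  have hT1 : ∑ j ∈ Finset.Icc 1 (i + 1),
      (-1 : ℚ) ^ j * (n.choose (j + 1) : ℚ) * ((n - j - 1).choose (i + 1 - j) : ℚ)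
      = -(((i : ℚ) + 1) * (n.choose (i + 2) : ℚ)) := by
    have h1 : ∀ j ∈ Finset.Icc 1 (i + 1),
        (-1 : ℚ) ^ j * (n.choose (j + 1) : ℚ) * ((n - j - 1).choose (i + 1 - j) : ℚ)
        = (n.choose (i + 2) : ℚ) * ((-1 : ℚ) ^ j * ((i + 2).choose (j + 1) : ℚ)) := by
      intro j hj
      simp only [Finset.mem_Icc] at hj
      have hB : ((n.choose (j + 1) : ℚ)) * ((n - j - 1).choose (i + 1 - j) : ℚ)
          = (n.choose (i + 2) : ℚ) * ((i + 2).choose (j + 1) : ℚ) := by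
        exact_mod_cast congrArg (Nat.cast : ℕ → ℚ) (lemB hin hj.2)
      calc (-1 : ℚ) ^ j * (n.choose (j + 1) : ℚ) * ((n - j - 1).choose (i + 1 - j) : ℚ)
          = (-1 : ℚ) ^ j * ((n.choose (j + 1) : ℚ) * ((n - j - 1).choose (i + 1 - j) : ℚ)) := by
            ring
        _ = _ := by rw [hB]; ring
    rw [Finset.sum_congr rfl h1, ← Finset.mul_sum]
    have halt := altQ (i + 2)
    rw [if_neg (by omega), show i + 2 + 1 = (i + 1) + 1 + 1 from rfl,
      Finset.sum_range_succ', Finset.sum_range_succ'] at halt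
    simp only [Nat.choose_one_right, Nat.choose_zero_right, pow_zero, Nat.cast_one, mul_one,
      pow_one, Nat.cast_add, Nat.cast_ofNat] at halt
    have hsum : ∑ j ∈ Finset.Icc 1 (i + 1), (-1 : ℚ) ^ j * ((i + 2).choose (j + 1) : ℚ)
        = -∑ x ∈ Finset.range (i + 1), (-1 : ℚ) ^ (x + 1 + 1) * ((i + 2).choose (x + 1 + 1) : ℚ) := by
      rw [← Finset.Ico_add_one_right_eq_Icc, Finset.sum_Ico_eq_sum_range]
      rw [show i + 1 + 1 - 1 = i + 1 from rfl, ← Finset.sum_neg_distrib]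
      refine Finset.sum_congr rfl ?_
      intro x hx
      have : (1 : ℕ) + x + 1 = x + 1 + 1 := by ring
      rw [this, show (-1 : ℚ) ^ (1 + x) = -(-1 : ℚ) ^ (x + 1 + 1) by
        rw [show x + 1 + 1 = (1 + x) + 1 by ring, pow_succ]; ring]
      ring
    rw [hsum]
    rw [show ((-1:ℚ)) ^ 1 = -1 from pow_one _, Nat.choose_one_right] at halt
    push_cast at halt
    linear_combination (-(n.choose (i + 2) : ℚ)) * halt
  -- Step 3: the double sum equals `β i`.
  have hT2 : ∑ j ∈ Finset.Icc 1 (i + 1), ∑ k ∈ Finset.range (i + 1),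
      (-1 : ℚ) ^ (j + k + 1) * ((n - 2 - k).choose (n - i - 2) : ℚ)
        * ((i - k).choose (i + 1 - j) : ℚ) * β k = β i := by
    rw [Finset.sum_comm]
    have hkcalc : ∀ k ∈ Finset.range (i + 1),
        ∑ j ∈ Finset.Icc 1 (i + 1), (-1 : ℚ) ^ (j + k + 1)
            * ((n - 2 - k).choose (n - i - 2) : ℚ) * ((i - k).choose (i + 1 - j) : ℚ) * β k
        = ((n - 2 - k).choose (n - i - 2) : ℚ) * β k * (if k = i then 1 else 0) := by
      intro k hk
      simp only [Finset.mem_range] at hk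
      have hki : k ≤ i := by omega
      have hrestrict : ∑ j ∈ Finset.Icc 1 (i + 1), (-1 : ℚ) ^ (j + k + 1)
            * ((n - 2 - k).choose (n - i - 2) : ℚ) * ((i - k).choose (i + 1 - j) : ℚ) * β k
          = ∑ j ∈ Finset.Icc (k + 1) (i + 1), (-1 : ℚ) ^ (j + k + 1)
            * ((n - 2 - k).choose (n - i - 2) : ℚ) * ((i - k).choose (i + 1 - j) : ℚ) * β k := by
        refine (Finset.sum_subset (by
          intro x hx
          simp only [Finset.mem_Icc] at hx ⊢
          omega) ?_).symm
        intro j hj hj'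
        simp only [Finset.mem_Icc] at hj hj'
        rw [Nat.choose_eq_zero_of_lt (show i - k < i + 1 - j by omega)]
        simp
      rw [hrestrict, ← Finset.Ico_add_one_right_eq_Icc, Finset.sum_Ico_eq_sum_range]
      have hlen : i + 1 + 1 - (k + 1) = (i - k) + 1 := by omega
      rw [hlen]
      have hterm : ∀ s ∈ Finset.range ((i - k) + 1),
          (-1 : ℚ) ^ (k + 1 + s + k + 1) * ((n - 2 - k).choose (n - i - 2) : ℚ)
              * ((i - k).choose (i + 1 - (k + 1 + s)) : ℚ) * β k
          = ((n - 2 - k).choose (n - i - 2) : ℚ) * β k * ((-1 : ℚ) ^ s * ((i - k).choose s : ℚ)) := by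
        intro s hs
        simp only [Finset.mem_range] at hs
        have hsign : (-1 : ℚ) ^ (k + 1 + s + k + 1) = (-1 : ℚ) ^ s := by
          rw [show k + 1 + s + k + 1 = s + 2 * (k + 1) by ring, pow_add, pow_mul, neg_one_sq,
            one_pow, mul_one]
        have harg : i + 1 - (k + 1 + s) = (i - k) - s := by omega
        rw [hsign, harg, Nat.choose_symm (show s ≤ i - k by omega)]
        ring
      rw [Finset.sum_congr rfl hterm, ← Finset.mul_sum, altQ (i - k)]
      congr 1
      by_cases h : k = i
      · rw [if_pos (by omega), if_pos h]
      · rw [if_neg (by omega), if_neg h]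
    rw [Finset.sum_congr rfl hkcalc]
    rw [Finset.sum_eq_single i
      (by intro b _ hb; rw [if_neg hb]; ring)
      (by intro h; exact absurd (Finset.self_mem_range_succ i) h)]
    rw [if_pos rfl, show n - 2 - i = n - i - 2 by omega, Nat.choose_self]
    push_cast
    ring
  rw [hT1, hT2]
  ring
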